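/- For every integer k ≥ 2, there exists a k-IP-set that contains no arithmetic progression of length k+1; that is, there is a strictly increasing sequence (x_i)_{i≥1} of positive integers such that no set of the form {a, a+d, a+2d, ..., a+kd} with a, d ∈ ℕ, d > 0, is contained in FS^k((x_i)). -/

import Mathlib

/-- `FSk k x` is the set of all finite sums `∑ εᵢ xᵢ` with each `εᵢ ∈ {0,…,k-1}`,
excluding `0`. -/
def FSk (k : ℕ) (x : ℕ → ℕ) : Set ℕ :=
  {s | ∃ n : ℕ, ∃ ε : Fin n → ℕ, (∀ i, ε i < k) ∧ s = ∑ i, ε i * x i} \ {0}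

lemma aux_sum_lt (p k : ℕ) (hkp : k ≤ p) (ε : ℕ → ℕ) (hε : ∀ i, ε i < k) :
    ∀ n, (∑ i ∈ Finset.range n, ε i * p ^ i) < p ^ n := by
  intro n
  induction n with
  | zero => simp
  | succ n ih =>
    rw [Finset.sum_range_succ, pow_succ]
    have h1 : ε n * p ^ n ≤ (p - 1) * p ^ n :=
      Nat.mul_le_mul_right _ (by have := hε n; omega)
    have hp : 0 < p := by
      have := hε 0; omega
    calc (∑ i ∈ Finset.range n, ε i * p ^ i) + ε n * p ^ n
        < p ^ n + (p - 1) * p ^ n := add_lt_add_of_lt_of_le ih h1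
      _ = p ^ n * p := by
          have : p ^ n + (p - 1) * p ^ n = (1 + (p - 1)) * p ^ n := by ring
          rw [this]
          have : 1 + (p - 1) = p := by omega
          rw [this]; ring
  
lemma aux_digit_lt (p k : ℕ) (hk : 0 < k) (hkp : k ≤ p) (n : ℕ) (ε : ℕ → ℕ)
    (hε : ∀ i, ε i < k) (t : ℕ) :
    (∑ i ∈ Finset.range n, ε i * p ^ i) / p ^ t % p < k := by
  have hp : 0 < p := lt_of_lt_of_le hk hkp
  rcases lt_or_ge t n with ht | ht
  · -- decompose the sum
    have hsplit : (∑ i ∈ Finset.range n, ε i * p ^ i)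
        = (∑ i ∈ Finset.range t, ε i * p ^ i)
          + p ^ t * (∑ i ∈ Finset.range (n - t), ε (t + i) * p ^ i) := by
      rw [Finset.mul_sum]
      have h1 : (∑ i ∈ Finset.range t, ε i * p ^ i) + (∑ i ∈ Finset.Ico t n, ε i * p ^ i)
          = ∑ i ∈ Finset.range n, ε i * p ^ i := by
        simpa using Finset.sum_Ico_consecutive (fun i => ε i * p ^ i) (Nat.zero_le t)
          (le_of_lt ht)
      rw [← h1, Finset.sum_Ico_eq_sum_range]
      congr 1
      apply Finset.sum_congr rfl
      intro i _
      rw [pow_add]; ring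
    rw [hsplit, Nat.add_mul_div_left _ _ (pow_pos hp t),
      Nat.div_eq_of_lt (aux_sum_lt p k hkp ε hε t), Nat.zero_add]
    obtain ⟨m, hm⟩ : ∃ m, n - t = m + 1 := ⟨n - t - 1, by omega⟩
    rw [hm, Finset.sum_range_succ']
    simp only [pow_zero, mul_one, add_zero]
    have hrw : (∑ i ∈ Finset.range m, ε (t + (i + 1)) * p ^ (i + 1)) + ε t
        = p * (∑ i ∈ Finset.range m, ε (t + (i + 1)) * p ^ i) + ε t := by
      rw [Finset.mul_sum]
      congr 1
      apply Finset.sum_congr rfl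
      intro i _
      rw [pow_succ]; ring
    rw [hrw, Nat.mul_add_mod]
    exact lt_of_le_of_lt (Nat.mod_le _ _) (hε t)
  · -- sum is smaller than p ^ t
    have : (∑ i ∈ Finset.range n, ε i * p ^ i) < p ^ t :=
      lt_of_lt_of_le (aux_sum_lt p k hkp ε hε n) (Nat.pow_le_pow_right hp ht)
    rw [Nat.div_eq_of_lt this]
    simpa using hk

/-- For every `k ≥ 2` there is a `k`-IP-set (namely `FSk k x` for a suitable strictly
increasing sequence `x` of positive integers) containing no arithmetic progression of
length `k + 1`. -/
theorem stmt2 (k : ℕ) (hk : 2 ≤ k) :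
    ∃ x : ℕ → ℕ, StrictMono x ∧ (∀ i, 0 < x i) ∧
      ¬ ∃ a d : ℕ, 0 < a ∧ 0 < d ∧ ∀ j ≤ k, a + j * d ∈ FSk k x := by
  obtain ⟨p, hpk, hp⟩ := Nat.exists_infinite_primes (k + 1)
  haveI : Fact p.Prime := ⟨hp⟩
  have hp1 : 1 < p := hp.one_lt
  refine ⟨fun i => p ^ i, fun i j hij => Nat.pow_lt_pow_right hp1 hij,
    fun i => pow_pos (show 0 < p by omega) i, ?_⟩
  rintro ⟨a, d, ha, hd, hAP⟩
  -- every element of FSk has all base-p digits < k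
  have hdig : ∀ s ∈ FSk k (fun i => p ^ i), ∀ t, s / p ^ t % p < k := by
    rintro s ⟨⟨n, ε, hε, rfl⟩, -⟩ t
    set ε' : ℕ → ℕ := fun i => if h : i < n then ε ⟨i, h⟩ else 0 with hε'
    have hsum : (∑ i : Fin n, ε i * p ^ (i : ℕ))
        = ∑ i ∈ Finset.range n, ε' i * p ^ i := by
      rw [← Fin.sum_univ_eq_sum_range (fun i => ε' i * p ^ i) n]
      apply Finset.sum_congr rfl
      intro i _
      simp [hε', i.isLt]
    rw [hsum]
    exact aux_digit_lt p k (by omega) (by omega) n ε'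
      (fun i => by by_cases h : i < n <;> simp [hε', h] <;> [exact hε ⟨i, h⟩; omega]) t
  -- p-adic valuation of d
  set v := padicValNat p d with hv
  set e := d / p ^ v with he
  have hdvd : p ^ v ∣ d := pow_padicValNat_dvd
  have hde : d = p ^ v * e := (Nat.mul_div_cancel' hdvd).symm
  have hepos : 0 < e := Nat.div_pos (Nat.le_of_dvd hd hdvd) (pow_pos (show 0 < p by omega) v)
  have hpe : ¬ p ∣ e := by
    intro hcon
    have : p ^ (v + 1) ∣ d := by
      rw [hde, pow_succ]
      exact mul_dvd_mul_left _ hcon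
    exact pow_succ_padicValNat_not_dvd hd.ne' this
  -- the digit at position v of a + j*d
  set c := a / p ^ v with hc
  have hdigits : ∀ j ≤ k, (c + j * e) % p < k := by
    intro j hj
    have hmem := hAP j hj
    have := hdig _ hmem v
    have heq : (a + j * d) / p ^ v = c + j * e := by
      have hrw : a + j * d = a % p ^ v + p ^ v * (c + j * e) := by
        have h0 : a % p ^ v + p ^ v * (a / p ^ v) = a := Nat.mod_add_div a (p ^ v)
        rw [hc, hde, mul_add, ← add_assoc, h0]
        ring
      rw [hrw, Nat.add_mul_div_left _ _ (pow_pos (show 0 < p by omega) v),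
        Nat.div_eq_of_lt (Nat.mod_lt _ (pow_pos (show 0 < p by omega) v)), Nat.zero_add]
    rwa [heq] at this
  -- pigeonhole
  have hmaps : ∀ j ∈ Finset.range (k + 1), (c + j * e) % p ∈ Finset.range k := by
    intro j hj
    rw [Finset.mem_range] at hj ⊢
    exact hdigits j (by omega)
  have key : ∀ j1 j2 : ℕ, j1 < j2 → j2 ≤ k → (c + j1 * e) % p ≠ (c + j2 * e) % p := by
    intro j1 j2 hlt hj2 hmod
    have hmeq : Nat.ModEq p (c + j1 * e) (c + j2 * e) := hmod
    have h1 : c + j1 * e ≤ c + j2 * e := by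
      have := Nat.mul_le_mul_right e (le_of_lt hlt); omega
    have hdvd2 : p ∣ (c + j2 * e) - (c + j1 * e) := (Nat.modEq_iff_dvd' h1).mp hmeq
    have hsub : (c + j2 * e) - (c + j1 * e) = (j2 - j1) * e := by
      rw [Nat.sub_mul]
      omega
    rw [hsub] at hdvd2
    rcases (Nat.Prime.dvd_mul hp).mp hdvd2 with h | h
    · have h0 : 0 < j2 - j1 := by omega
      have := Nat.le_of_dvd h0 h
      omega
    · exact hpe h
  have hinj : Set.InjOn (fun j => (c + j * e) % p) (Finset.range (k + 1)) := by
    intro j1 hj1 j2 hj2 hfeq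
    simp only [Finset.coe_range, Set.mem_Iio] at hj1 hj2
    rcases lt_trichotomy j1 j2 with h | h | h
    · exact absurd hfeq (key j1 j2 h (by omega))
    · exact h
    · exact absurd hfeq.symm (key j2 j1 h (by omega))
  have := Finset.card_le_card_of_injOn _ hmaps hinj
  simp only [Finset.card_range] at this
  omega
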